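/- arXiv:2507.00853 — 2 statements merged into one kernel-verified Lean document; each statement's English description precedes it below -/
import Mathlib

section
/- Let T > 0, b > 0, r > 0, λ > 0. Suppose η : [0,T] → ℝ and π : [0,T] → ℝ are differentiable and satisfy dη/dt = (b²/r)·η(t)² with η(T) = λ, and dπ/dt = (b²/r)·π(t)² + 2·(b²/r)·η(t)·π(t) with π(T) = −λ. Then π(t) = −η(t) for every t ∈ [0,T]. Equivalently, the sum s := η + π is differentiable, satisfies ds/dt = (b²/r)·s(t)² with s(T) = 0, and hence s ≡ 0 on [0,T]. -/
open Set

/-- if `η` solves `dη/dt = (b²/r)η²`, `η(T) = λ` and `p` solves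
`dp/dt = (b²/r)p² + 2(b²/r)ηp`, `p(T) = −λ` on `[0,T]`, then `p = −η` on `[0,T]`;
equivalently, the sum `s = η + p` satisfies `ds/dt = (b²/r)s²`, `s(T) = 0`,
and hence `s ≡ 0` on `[0,T]`. -/
theorem stmt_2 (T b r lam : ℝ) (hT : 0 < T) (hb : 0 < b) (hr : 0 < r) (hlam : 0 < lam)
    (η p : ℝ → ℝ)
    (hη : ∀ t ∈ Icc (0:ℝ) T, HasDerivWithinAt η ((b ^ 2 / r) * (η t) ^ 2) (Icc (0:ℝ) T) t)
    (hηT : η T = lam)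
    (hp : ∀ t ∈ Icc (0:ℝ) T,
      HasDerivWithinAt p ((b ^ 2 / r) * (p t) ^ 2 + 2 * (b ^ 2 / r) * η t * p t)
        (Icc (0:ℝ) T) t)
    (hpT : p T = -lam) :
    (∀ t ∈ Icc (0:ℝ) T, p t = -η t) ∧
    (∀ t ∈ Icc (0:ℝ) T,
      HasDerivWithinAt (fun t => η t + p t) ((b ^ 2 / r) * (η t + p t) ^ 2) (Icc (0:ℝ) T) t) ∧
    η T + p T = 0 ∧
    (∀ t ∈ Icc (0:ℝ) T, η t + p t = 0) := by
  set c : ℝ := b ^ 2 / r with hc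
  set s : ℝ → ℝ := fun t => η t + p t with hsdef
  -- derivative of the sum
  have hs : ∀ t ∈ Icc (0:ℝ) T, HasDerivWithinAt s (c * (s t) ^ 2) (Icc (0:ℝ) T) t := by
    intro t ht
    have : HasDerivWithinAt s (c * η t ^ 2 + (c * p t ^ 2 + 2 * c * η t * p t)) (Icc (0:ℝ) T) t :=
      (hη t ht).add (hp t ht)
    convert this using 1
    simp only [hsdef]
    ring
  -- s is continuous on [0,T]
  have hscont : ContinuousOn s (Icc (0:ℝ) T) := fun t ht => (hs t ht).continuousWithinAt
  -- bound M on |s|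
  obtain ⟨M, hM⟩ := (isCompact_Icc (a := (0:ℝ)) (b := T)).exists_bound_of_continuousOn hscont
  have hM0 : 0 ≤ M := le_trans (norm_nonneg _) (hM 0 ⟨le_refl _, hT.le⟩)
  set K : ℝ := c * M with hK
  -- the time-reversed function
  set u : ℝ → ℝ := fun x => s (T - x) with hu
  have hmem : ∀ x ∈ Icc (0:ℝ) T, T - x ∈ Icc (0:ℝ) T := by
    intro x hx; constructor <;> [linarith [hx.2]; linarith [hx.1]]
  have hucont : ContinuousOn u (Icc (0:ℝ) T) := by
    apply hscont.comp (by fun_prop) hmem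
  have hu' : ∀ x ∈ Ico (0:ℝ) T, HasDerivWithinAt u (-(c * (s (T - x)) ^ 2)) (Ici x) x := by
    intro x hx
    have hgx : HasDerivWithinAt (fun y : ℝ => T - y) (-1) (Icc x T) x := by
      simpa using ((hasDerivAt_id' x).const_sub T).hasDerivWithinAt
    have hmaps : MapsTo (fun y : ℝ => T - y) (Icc x T) (Icc (0:ℝ) T) := by
      intro y hy
      simp only [mem_Icc] at hy ⊢
      constructor <;> [linarith [hy.2]; linarith [hy.1, hx.1]]
    have hst := hs (T - x) (hmem x ⟨hx.1, hx.2.le⟩)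
    have hcomp : HasDerivWithinAt u ((c * (s (T - x)) ^ 2) * (-1)) (Icc x T) x :=
      hst.comp x hgx hmaps
    have : HasDerivWithinAt u (-(c * (s (T - x)) ^ 2)) (Icc x T) x := by
      convert hcomp using 1; ring
    exact this.mono_of_mem_nhdsWithin (Icc_mem_nhdsGE_of_mem ⟨le_refl x, hx.2⟩)
  have hbound : ∀ x ∈ Ico (0:ℝ) T, ‖-(c * (s (T - x)) ^ 2)‖ ≤ K * ‖u x‖ + 0 := by
    intro x hx
    have hc0 : 0 ≤ c := div_nonneg (sq_nonneg b) hr.le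
    have hsb : |s (T - x)| ≤ M := hM _ (hmem x ⟨hx.1, hx.2.le⟩)
    have : ‖-(c * (s (T - x)) ^ 2)‖ = c * (|s (T - x)| * |s (T - x)|) := by
      rw [norm_neg, Real.norm_eq_abs, abs_mul, abs_of_nonneg hc0, sq, abs_mul]
    rw [this, add_zero, hK]
    have : ‖u x‖ = |s (T - x)| := rfl
    rw [this, mul_assoc]
    exact mul_le_mul_of_nonneg_left
      (mul_le_mul_of_nonneg_right hsb (abs_nonneg _)) hc0
  have hu0 : ‖u 0‖ ≤ 0 := by
    simp only [hu, sub_zero, hsdef, Real.norm_eq_abs]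
    simp [hηT, hpT]
  have key := norm_le_gronwallBound_of_norm_deriv_right_le hucont hu' hu0 hbound
  have hs0 : ∀ t ∈ Icc (0:ℝ) T, s t = 0 := by
    intro t ht
    have hx : T - t ∈ Icc (0:ℝ) T := hmem t ht
    have := key (T - t) hx
    rw [gronwallBound_ε0] at this
    simp only [hu, sub_sub_cancel] at this
    have : ‖s t‖ ≤ 0 := by simpa using this
    simpa using le_antisymm this (norm_nonneg _)
  refine ⟨fun t ht => ?_, hs, by simp [hηT, hpT], hs0⟩
  have := hs0 t ht
  simp only [hsdef] at this
  linarith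
end

section
/- Let T > 0, b > 0, r > 0, λ > 0, σ > 0, ν > 0, m₀ ∈ ℝ, 𝒳 ∈ ℝ, and let γ : [0,T] → ℝ be continuous. Then there exists a unique 5-tuple of differentiable functions (η, π, v, φ, q̄) on [0,T] satisfying simultaneously: dη/dt = (b²/r)·η², η(T) = λ; dπ/dt = (b²/r)·π² + 2·(b²/r)·η·π, π(T) = −λ; dv/dt = σ² − 2·(b²/r)·η·v, v(0) = ν² (and v(t) > 0 for all t so that the equations below are well defined); dφ/dt = −(σ²/2)·(𝒳/√v)·π, φ(T) = 0; and dq̄/dt = γ(t) − (b²/r)·φ + (σ²/2)·𝒳/√v, q̄(0) = m₀ + ν·𝒳. -/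
open Set

/-- A tuple `(η, p, v, φ, q)` of differentiable functions solves the fully decoupled
mean-field consistency FBODE system (fbode1)–(fbode5) on `[0,T]`:
`dη/dt = (b²/r)η²`, `η(T) = λ`;
`dp/dt = (b²/r)p² + 2(b²/r)ηp`, `p(T) = −λ`;
`dv/dt = σ² − 2(b²/r)ηv`, `v(0) = ν²` (with `v > 0` so that `1/√v` is well defined);
`dφ/dt = −(σ²/2)(𝒳/√v)p`, `φ(T) = 0`;
`dq/dt = γ(t) − (b²/r)φ + (σ²/2)𝒳/√v`, `q(0) = m₀ + ν·𝒳`. -/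
def MFConsistencySol (T b r lam σ ν m₀ Xa : ℝ) (γ η p v φ q : ℝ → ℝ) : Prop :=
  (∀ t ∈ Icc (0:ℝ) T,
    HasDerivWithinAt η ((b ^ 2 / r) * (η t) ^ 2) (Icc (0:ℝ) T) t) ∧
  η T = lam ∧
  (∀ t ∈ Icc (0:ℝ) T,
    HasDerivWithinAt p ((b ^ 2 / r) * (p t) ^ 2 + 2 * (b ^ 2 / r) * η t * p t)
      (Icc (0:ℝ) T) t) ∧
  p T = -lam ∧
  (∀ t ∈ Icc (0:ℝ) T,
    HasDerivWithinAt v (σ ^ 2 - 2 * (b ^ 2 / r) * η t * v t) (Icc (0:ℝ) T) t) ∧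
  v 0 = ν ^ 2 ∧
  (∀ t ∈ Icc (0:ℝ) T, 0 < v t) ∧
  (∀ t ∈ Icc (0:ℝ) T,
    HasDerivWithinAt φ (-(σ ^ 2 / 2) * (Xa / Real.sqrt (v t)) * p t) (Icc (0:ℝ) T) t) ∧
  φ T = 0 ∧
  (∀ t ∈ Icc (0:ℝ) T,
    HasDerivWithinAt q (γ t - (b ^ 2 / r) * φ t + (σ ^ 2 / 2) * Xa / Real.sqrt (v t))
      (Icc (0:ℝ) T) t) ∧
  q 0 = m₀ + ν * Xa

/- ### Auxiliary lemmas for derivatives within intervals -/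

private lemma derivWithin_to_Ici {f : ℝ → ℝ} {d T t : ℝ} (ht : t ∈ Ico (0:ℝ) T)
    (h : HasDerivWithinAt f d (Icc (0:ℝ) T) t) : HasDerivWithinAt f d (Ici t) t := by
  refine (h.mono (Icc_subset_Icc_left ht.1)).mono_of_mem_nhdsWithin ?_
  rw [← Ici_inter_Iic]
  exact inter_mem_nhdsWithin _ (Iic_mem_nhds ht.2)

private lemma derivWithin_to_Iic {f : ℝ → ℝ} {d T t : ℝ} (ht : t ∈ Ioc (0:ℝ) T)
    (h : HasDerivWithinAt f d (Icc (0:ℝ) T) t) : HasDerivWithinAt f d (Iic t) t := by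
  refine (h.mono (Icc_subset_Icc_right ht.2)).mono_of_mem_nhdsWithin ?_
  have : Icc (0:ℝ) t = Iic t ∩ Ici 0 := by rw [inter_comm, Ici_inter_Iic]
  rw [this]
  exact inter_mem_nhdsWithin _ (Ici_mem_nhds ht.1)

/- ### Grönwall-type uniqueness wrappers -/

private lemma uniq_fwd {T : ℝ} {w : ℝ → ℝ → ℝ} {K : NNReal}
    (hw : ∀ t, LipschitzWith K (w t)) {f g : ℝ → ℝ}
    (hf : ∀ t ∈ Icc (0:ℝ) T, HasDerivWithinAt f (w t (f t)) (Icc (0:ℝ) T) t)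
    (hg : ∀ t ∈ Icc (0:ℝ) T, HasDerivWithinAt g (w t (g t)) (Icc (0:ℝ) T) t)
    (h0 : f 0 = g 0) : EqOn f g (Icc (0:ℝ) T) :=
  ODE_solution_unique_of_mem_Icc_right (s := fun _ => (univ : Set ℝ))
    (fun t _ => LipschitzWith.lipschitzOnWith (hw t) (s := univ))
    (fun t ht => (hf t ht).continuousWithinAt)
    (fun t ht => derivWithin_to_Ici ht (hf t (Ico_subset_Icc_self ht)))
    (fun _ _ => mem_univ _)
    (fun t ht => (hg t ht).continuousWithinAt)
    (fun t ht => derivWithin_to_Ici ht (hg t (Ico_subset_Icc_self ht)))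
    (fun _ _ => mem_univ _) h0

private lemma uniq_bwd {T : ℝ} {w : ℝ → ℝ → ℝ} {K : NNReal}
    (hw : ∀ t, LipschitzWith K (w t)) {f g : ℝ → ℝ}
    (hf : ∀ t ∈ Icc (0:ℝ) T, HasDerivWithinAt f (w t (f t)) (Icc (0:ℝ) T) t)
    (hg : ∀ t ∈ Icc (0:ℝ) T, HasDerivWithinAt g (w t (g t)) (Icc (0:ℝ) T) t)
    (hT : f T = g T) : EqOn f g (Icc (0:ℝ) T) :=
  ODE_solution_unique_of_mem_Icc_left (s := fun _ => (univ : Set ℝ))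
    (fun t _ => LipschitzWith.lipschitzOnWith (hw t) (s := univ))
    (fun t ht => (hf t ht).continuousWithinAt)
    (fun t ht => derivWithin_to_Iic ht (hf t (Ioc_subset_Icc_self ht)))
    (fun _ _ => mem_univ _)
    (fun t ht => (hg t ht).continuousWithinAt)
    (fun t ht => derivWithin_to_Iic ht (hg t (Ioc_subset_Icc_self ht)))
    (fun _ _ => mem_univ _) hT

/- ### Clamping and Lipschitz estimates -/

private def cl (M x : ℝ) : ℝ := max (min x M) (-M)

private lemma cl_eq {M x : ℝ} (h : |x| ≤ M) : cl M x = x := by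
  rw [abs_le] at h
  rw [cl, min_eq_left h.2, max_eq_left h.1]

private lemma abs_cl_le {M : ℝ} (hM : 0 ≤ M) (x : ℝ) : |cl M x| ≤ M :=
  abs_le.2 ⟨le_max_right _ _, max_le (min_le_right _ _) ((neg_nonpos.2 hM).trans hM)⟩

private lemma lip_aux {a M L : ℝ} (ha : 0 ≤ a) (hM : 0 ≤ M) (hL : 0 ≤ L)
    {c : ℝ} (e : ℝ) (hc : |c| ≤ L) :
    LipschitzWith (Real.toNNReal (2*a*M + L)) (fun x => a*(cl M x)^2 + c*x + e) := by
  have hcl : LipschitzWith 1 (cl M) := (LipschitzWith.id.min_const M).max_const (-M)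
  rw [lipschitzWith_iff_dist_le_mul]
  intro x y
  have h1 : |cl M x - cl M y| ≤ |x - y| := by
    have := hcl.dist_le_mul x y
    simpa [Real.dist_eq] using this
  have h2 : |cl M x + cl M y| ≤ 2*M := by
    calc |cl M x + cl M y| ≤ |cl M x| + |cl M y| := abs_add_le _ _
      _ ≤ M + M := add_le_add (abs_cl_le hM x) (abs_cl_le hM y)
      _ = 2*M := by ring
  rw [Real.dist_eq, Real.dist_eq, Real.coe_toNNReal _ (by positivity)]
  have key : (a*(cl M x)^2 + c*x + e) - (a*(cl M y)^2 + c*y + e)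
      = a*((cl M x + cl M y)*(cl M x - cl M y)) + c*(x - y) := by ring
  rw [key]
  calc |a*((cl M x + cl M y)*(cl M x - cl M y)) + c*(x - y)|
      ≤ |a*((cl M x + cl M y)*(cl M x - cl M y))| + |c*(x - y)| := abs_add_le _ _
    _ = a*(|cl M x + cl M y| * |cl M x - cl M y|) + |c| * |x - y| := by
        rw [abs_mul, abs_mul, abs_mul, abs_of_nonneg ha]
    _ ≤ a*((2*M)*|x - y|) + L*|x - y| :=
        add_le_add (mul_le_mul_of_nonneg_left
            (mul_le_mul h2 h1 (abs_nonneg _) (by positivity)) ha)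
          (mul_le_mul_of_nonneg_right hc (abs_nonneg _))
    _ = (2*a*M + L)*|x - y| := by ring
/- ### Explicit solutions -/

noncomputable def mfD (k lam T t : ℝ) : ℝ := 1/lam + k*(T - t)

noncomputable def mfEta (k lam T t : ℝ) : ℝ := (mfD k lam T t)⁻¹

noncomputable def mfV (k lam T σ ν t : ℝ) : ℝ :=
  (ν^2/(mfD k lam T 0)^2 - σ^2/(k*(mfD k lam T 0))) * (mfD k lam T t)^2
    + (σ^2/k) * (mfD k lam T t)

noncomputable def mfProj (T t : ℝ) : ℝ := max 0 (min T t)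

variable {k lam T σ ν : ℝ}

lemma mfD_pos (hk : 0 < k) (hlam : 0 < lam) {t : ℝ} (ht : t ≤ T) : 0 < mfD k lam T t := by
  unfold mfD
  have h1 : 0 < 1/lam := by positivity
  have h2 : 0 ≤ k*(T - t) := mul_nonneg hk.le (by linarith)
  linarith

lemma hasDerivAt_mfD (t : ℝ) : HasDerivAt (fun t => mfD k lam T t) (-k) t := by
  unfold mfD
  have h : HasDerivAt (fun t : ℝ => T - t) (-1) t := by
    simpa using (hasDerivAt_id t).const_sub T
  have := (h.const_mul k).const_add (1/lam)
  simpa using this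

lemma hasDerivAt_mfEta (hk : 0 < k) (hlam : 0 < lam) {t : ℝ} (ht : t ≤ T) :
    HasDerivAt (fun t => mfEta k lam T t) (k * (mfEta k lam T t)^2) t := by
  have hD := mfD_pos hk hlam ht
  have h := (hasDerivAt_mfD (k := k) (lam := lam) (T := T) t).inv hD.ne'
  refine h.congr_deriv ?_
  unfold mfEta
  field_simp

lemma mfEta_T (hlam : 0 < lam) : mfEta k lam T T = lam := by
  unfold mfEta mfD
  simp

lemma mfEta_pos (hk : 0 < k) (hlam : 0 < lam) {t : ℝ} (ht : t ≤ T) : 0 < mfEta k lam T t :=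
  inv_pos.2 (mfD_pos hk hlam ht)

lemma hasDerivAt_mfV (hk : 0 < k) (hlam : 0 < lam) {t : ℝ} (ht : t ≤ T) :
    HasDerivAt (fun t => mfV k lam T σ ν t)
      (σ^2 - 2*k*(mfEta k lam T t)*(mfV k lam T σ ν t)) t := by
  have hDt := mfD_pos hk hlam ht
  set A : ℝ := ν^2/(mfD k lam T 0)^2 - σ^2/(k*(mfD k lam T 0)) with hA
  have h1 : HasDerivAt (fun t => (mfD k lam T t)^2) (2*(mfD k lam T t)*(-k)) t := by
    have := (hasDerivAt_mfD (k := k) (lam := lam) (T := T) t).pow 2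
    exact this.congr_deriv (by simp)
  have h2 := (h1.const_mul A).add
    ((hasDerivAt_mfD (k := k) (lam := lam) (T := T) t).const_mul (σ^2/k))
  have heq : ∀ s : ℝ, mfV k lam T σ ν s = A * (mfD k lam T s)^2 + (σ^2/k) * (mfD k lam T s) := by
    intro s; rw [mfV, hA]
  have h3 : HasDerivAt (fun t => mfV k lam T σ ν t)
      (A * (2*(mfD k lam T t)*(-k)) + (σ^2/k) * (-k)) t := by
    exact h2
  convert h3 using 1
  rw [heq t]
  unfold mfEta
  field_simp [hDt.ne', hk.ne']
  ring

lemma mfV_zero (hk : 0 < k) (hlam : 0 < lam) (hT : 0 < T) : mfV k lam T σ ν 0 = ν^2 := by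
  have hD0 := mfD_pos (T := T) hk hlam (t := 0) hT.le
  unfold mfV
  field_simp [hD0.ne', hk.ne']
  ring

lemma mfV_pos (hk : 0 < k) (hlam : 0 < lam) (hT : 0 < T) (hν : 0 < ν) {t : ℝ}
    (ht : t ∈ Set.Icc 0 T) : 0 < mfV k lam T σ ν t := by
  have hD0 : 0 < mfD k lam T 0 := mfD_pos hk hlam hT.le
  have hDt : 0 < mfD k lam T t := mfD_pos hk hlam ht.2
  have hle : mfD k lam T t ≤ mfD k lam T 0 := by
    unfold mfD
    have : 0 ≤ k * t := mul_nonneg hk.le ht.1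
    nlinarith
  have key : mfV k lam T σ ν t
      = ν^2*(mfD k lam T t)^2/(mfD k lam T 0)^2
        + (σ^2/(k*(mfD k lam T 0))) * ((mfD k lam T t) * ((mfD k lam T 0) - (mfD k lam T t))) := by
    unfold mfV
    field_simp [hD0.ne', hDt.ne', hk.ne']
    ring
  rw [key]
  have t1 : 0 < ν^2*(mfD k lam T t)^2/(mfD k lam T 0)^2 := by positivity
  have t2 : 0 ≤ (σ^2/(k*(mfD k lam T 0))) * ((mfD k lam T t) * ((mfD k lam T 0) - (mfD k lam T t))) := by
    apply mul_nonneg (by positivity)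
    exact mul_nonneg hDt.le (by linarith)
  linarith

lemma continuous_mfV : Continuous (fun t => mfV k lam T σ ν t) := by
  unfold mfV mfD; fun_prop

lemma continuous_mfProj : Continuous (mfProj T) := by
  unfold mfProj; fun_prop

lemma mfProj_mem (hT' : 0 ≤ T) (t : ℝ) : mfProj T t ∈ Set.Icc (0:ℝ) T :=
  ⟨le_max_left _ _, max_le hT' (min_le_left _ _)⟩

lemma mfProj_eq {t : ℝ} (ht : t ∈ Set.Icc (0:ℝ) T) : mfProj T t = t := by
  unfold mfProj
  rw [min_eq_right ht.2, max_eq_right ht.1]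

lemma continuous_mfEta_proj (hk : 0 < k) (hlam : 0 < lam) (hT : 0 < T) :
    Continuous (fun s => mfEta k lam T (mfProj T s)) := by
  apply Continuous.inv₀
  · unfold mfD mfProj; fun_prop
  · intro s
    exact (mfD_pos hk hlam (mfProj_mem hT.le s).2).ne'

lemma continuous_sqrt_mfV_proj :
    Continuous (fun s => Real.sqrt (mfV k lam T σ ν (mfProj T s))) :=
  Real.continuous_sqrt.comp ((continuous_mfV).comp (continuous_mfProj))

lemma sqrt_mfV_proj_ne (hk : 0 < k) (hlam : 0 < lam) (hT : 0 < T) (hν : 0 < ν) (s : ℝ) :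
    Real.sqrt (mfV k lam T σ ν (mfProj T s)) ≠ 0 :=
  (Real.sqrt_pos.2 (mfV_pos hk hlam hT hν (mfProj_mem hT.le s))).ne'

noncomputable def mfFphi (k lam T σ ν Xa : ℝ) (s : ℝ) : ℝ :=
  -(σ^2/2) * (Xa / Real.sqrt (mfV k lam T σ ν (mfProj T s))) * (-(mfEta k lam T (mfProj T s)))

noncomputable def mfPhi (k lam T σ ν Xa : ℝ) (t : ℝ) : ℝ :=
  ∫ s in T..t, mfFphi k lam T σ ν Xa s

lemma continuous_mfFphi (hk : 0 < k) (hlam : 0 < lam) (hT : 0 < T) (hν : 0 < ν) (Xa : ℝ) :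
    Continuous (mfFphi k lam T σ ν Xa) := by
  unfold mfFphi
  exact (continuous_const.mul
    (continuous_const.div (continuous_sqrt_mfV_proj) (sqrt_mfV_proj_ne hk hlam hT hν))).mul
    (continuous_mfEta_proj hk hlam hT).neg

lemma hasDerivAt_mfPhi (hk : 0 < k) (hlam : 0 < lam) (hT : 0 < T) (hν : 0 < ν) (Xa t : ℝ) :
    HasDerivAt (mfPhi k lam T σ ν Xa) (mfFphi k lam T σ ν Xa t) t :=
  ((continuous_mfFphi hk hlam hT hν Xa).integral_hasStrictDerivAt T t).hasDerivAt

lemma mfPhi_T (Xa : ℝ) : mfPhi k lam T σ ν Xa T = 0 :=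
  intervalIntegral.integral_same

lemma continuous_mfPhi (hk : 0 < k) (hlam : 0 < lam) (hT : 0 < T) (hν : 0 < ν) (Xa : ℝ) :
    Continuous (mfPhi k lam T σ ν Xa) := by
  have := fun t => (hasDerivAt_mfPhi (σ := σ) hk hlam hT hν Xa t).differentiableAt
  exact Differentiable.continuous this

noncomputable def mfFq (k lam T σ ν Xa : ℝ) (γ : ℝ → ℝ) (s : ℝ) : ℝ :=
  γ (mfProj T s) - k * mfPhi k lam T σ ν Xa s
    + (σ^2/2) * Xa / Real.sqrt (mfV k lam T σ ν (mfProj T s))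

noncomputable def mfQ (k lam T σ ν m₀ Xa : ℝ) (γ : ℝ → ℝ) (t : ℝ) : ℝ :=
  m₀ + ν*Xa + ∫ s in (0:ℝ)..t, mfFq k lam T σ ν Xa γ s

variable {γ : ℝ → ℝ}

lemma continuous_mfFq (hk : 0 < k) (hlam : 0 < lam) (hT : 0 < T) (hν : 0 < ν) (Xa : ℝ)
    (hγ : ContinuousOn γ (Set.Icc (0:ℝ) T)) :
    Continuous (mfFq k lam T σ ν Xa γ) := by
  unfold mfFq
  refine ((hγ.comp_continuous (continuous_mfProj) (mfProj_mem hT.le)).sub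
    (continuous_const.mul (continuous_mfPhi hk hlam hT hν Xa))).add ?_
  exact continuous_const.div (continuous_sqrt_mfV_proj) (sqrt_mfV_proj_ne hk hlam hT hν)

lemma hasDerivAt_mfQ (hk : 0 < k) (hlam : 0 < lam) (hT : 0 < T) (hν : 0 < ν) (m₀ Xa : ℝ)
    (hγ : ContinuousOn γ (Set.Icc (0:ℝ) T)) (t : ℝ) :
    HasDerivAt (mfQ k lam T σ ν m₀ Xa γ) (mfFq k lam T σ ν Xa γ t) t := by
  have := ((continuous_mfFq (σ := σ) hk hlam hT hν Xa hγ).integral_hasStrictDerivAt 0 t).hasDerivAt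
  exact this.const_add _

lemma mfQ_zero (m₀ Xa : ℝ) : mfQ k lam T σ ν m₀ Xa γ 0 = m₀ + ν*Xa := by
  unfold mfQ
  rw [intervalIntegral.integral_same, add_zero]
/- ### Main statement -/

/-- existence and uniqueness of the solution of the decoupled mean-field
consistency system (fbode1)–(fbode5) on `[0,T]`. -/
theorem stmt_6 (T b r lam σ ν m₀ Xa : ℝ) (hT : 0 < T) (hb : 0 < b) (hr : 0 < r)
    (hlam : 0 < lam) (hσ : 0 < σ) (hν : 0 < ν)
    (γ : ℝ → ℝ) (hγ : ContinuousOn γ (Icc (0:ℝ) T)) :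
    (∃ η p v φ q : ℝ → ℝ, MFConsistencySol T b r lam σ ν m₀ Xa γ η p v φ q) ∧
    (∀ η₁ p₁ v₁ φ₁ q₁ η₂ p₂ v₂ φ₂ q₂ : ℝ → ℝ,
      MFConsistencySol T b r lam σ ν m₀ Xa γ η₁ p₁ v₁ φ₁ q₁ →
      MFConsistencySol T b r lam σ ν m₀ Xa γ η₂ p₂ v₂ φ₂ q₂ →
      ∀ t ∈ Icc (0:ℝ) T,
        η₁ t = η₂ t ∧ p₁ t = p₂ t ∧ v₁ t = v₂ t ∧ φ₁ t = φ₂ t ∧ q₁ t = q₂ t) := by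
  have hk : 0 < b ^ 2 / r := by positivity
  constructor
  · -- ### Existence
    refine ⟨(fun t => mfEta (b^2/r) lam T t), (fun t => -(mfEta (b^2/r) lam T t)),
      (fun t => mfV (b^2/r) lam T σ ν t), mfPhi (b^2/r) lam T σ ν Xa,
      mfQ (b^2/r) lam T σ ν m₀ Xa γ, ?_, ?_, ?_, ?_, ?_, ?_, ?_, ?_, ?_, ?_, ?_⟩
    · exact fun t ht => (hasDerivAt_mfEta hk hlam ht.2).hasDerivWithinAt
    · exact mfEta_T hlam
    · intro t ht
      have h := ((hasDerivAt_mfEta hk hlam ht.2).neg).hasDerivWithinAt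
        (s := Icc (0:ℝ) T)
      refine h.congr_deriv (Eq.symm ?_)
      show (b^2/r) * (-(mfEta (b^2/r) lam T t))^2
          + 2 * (b^2/r) * (mfEta (b^2/r) lam T t) * (-(mfEta (b^2/r) lam T t))
          = -((b^2/r) * (mfEta (b^2/r) lam T t)^2)
      ring
    · show -(mfEta (b^2/r) lam T T) = -lam
      rw [mfEta_T hlam]
    · exact fun t ht => (hasDerivAt_mfV hk hlam ht.2).hasDerivWithinAt
    · exact mfV_zero hk hlam hT
    · exact fun t ht => mfV_pos hk hlam hT hν ht
    · intro t ht
      have h := (hasDerivAt_mfPhi (σ := σ) hk hlam hT hν Xa t).hasDerivWithinAt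
        (s := Icc (0:ℝ) T)
      rw [mfFphi, mfProj_eq ht] at h
      exact h
    · exact mfPhi_T Xa
    · intro t ht
      have h := (hasDerivAt_mfQ (σ := σ) hk hlam hT hν m₀ Xa hγ t).hasDerivWithinAt
        (s := Icc (0:ℝ) T)
      rw [mfFq, mfProj_eq ht] at h
      exact h
    · exact mfQ_zero m₀ Xa
  · -- ### Uniqueness
    rintro η₁ p₁ v₁ φ₁ q₁ η₂ p₂ v₂ φ₂ q₂ h1 h2
    obtain ⟨hη₁, hη₁T, hp₁, hp₁T, hv₁, hv₁0, hv₁pos, hφ₁, hφ₁T, hq₁, hq₁0⟩ := h1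
    obtain ⟨hη₂, hη₂T, hp₂, hp₂T, hv₂, hv₂0, hv₂pos, hφ₂, hφ₂T, hq₂, hq₂0⟩ := h2
    -- uniform bounds for η₁, η₂, p₁, p₂ on [0,T]
    have bound : ∀ f : ℝ → ℝ, ContinuousOn f (Icc (0:ℝ) T) →
        ∃ C : ℝ, 0 ≤ C ∧ ∀ t ∈ Icc (0:ℝ) T, |f t| ≤ C := by
      intro f hf
      obtain ⟨C, hC⟩ := isCompact_Icc.exists_bound_of_continuousOn hf
      refine ⟨C, ?_, fun t ht => ?_⟩
      · have h0 := hC 0 ⟨le_refl 0, hT.le⟩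
        rw [Real.norm_eq_abs] at h0
        exact le_trans (abs_nonneg _) h0
      · have h0 := hC t ht
        rwa [Real.norm_eq_abs] at h0
    obtain ⟨Cη₁, hCη₁0, hCη₁⟩ := bound η₁ (fun t ht => (hη₁ t ht).continuousWithinAt)
    obtain ⟨Cη₂, hCη₂0, hCη₂⟩ := bound η₂ (fun t ht => (hη₂ t ht).continuousWithinAt)
    obtain ⟨Cp₁, hCp₁0, hCp₁⟩ := bound p₁ (fun t ht => (hp₁ t ht).continuousWithinAt)
    obtain ⟨Cp₂, hCp₂0, hCp₂⟩ := bound p₂ (fun t ht => (hp₂ t ht).continuousWithinAt)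
    set Mη : ℝ := max Cη₁ Cη₂ with hMη_def
    set Mp : ℝ := max Cp₁ Cp₂ with hMp_def
    have hMη0 : 0 ≤ Mη := le_trans hCη₁0 (le_max_left _ _)
    have hMp0 : 0 ≤ Mp := le_trans hCp₁0 (le_max_left _ _)
    have hbη₁ : ∀ t ∈ Icc (0:ℝ) T, |η₁ t| ≤ Mη :=
      fun t ht => (hCη₁ t ht).trans (le_max_left _ _)
    have hbη₂ : ∀ t ∈ Icc (0:ℝ) T, |η₂ t| ≤ Mη :=
      fun t ht => (hCη₂ t ht).trans (le_max_right _ _)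
    have hbp₁ : ∀ t ∈ Icc (0:ℝ) T, |p₁ t| ≤ Mp :=
      fun t ht => (hCp₁ t ht).trans (le_max_left _ _)
    have hbp₂ : ∀ t ∈ Icc (0:ℝ) T, |p₂ t| ≤ Mp :=
      fun t ht => (hCp₂ t ht).trans (le_max_right _ _)
    -- Step 1 : uniqueness of η
    have heqη : EqOn η₁ η₂ (Icc (0:ℝ) T) := by
      refine uniq_bwd (w := fun _ x => (b^2/r)*(cl Mη x)^2 + 0*x + 0)
        (K := Real.toNNReal (2*(b^2/r)*Mη + 0))
        (fun _ => lip_aux hk.le hMη0 le_rfl 0 (by simp))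
        (fun t ht => ?_) (fun t ht => ?_) (by rw [hη₁T, hη₂T])
      · convert hη₁ t ht using 1
        simp only [cl_eq (hbη₁ t ht)]
        ring
      · convert hη₂ t ht using 1
        simp only [cl_eq (hbη₂ t ht)]
        ring
    -- Step 2 : uniqueness of p
    have hcη : ∀ t : ℝ, |2*(b^2/r)*(cl Mη (η₁ t))| ≤ 2*(b^2/r)*Mη := by
      intro t
      rw [abs_mul, abs_of_nonneg (by positivity : (0:ℝ) ≤ 2*(b^2/r))]
      exact mul_le_mul_of_nonneg_left (abs_cl_le hMη0 _) (by positivity)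
    have heqp : EqOn p₁ p₂ (Icc (0:ℝ) T) := by
      refine uniq_bwd (w := fun t x => (b^2/r)*(cl Mp x)^2 + (2*(b^2/r)*(cl Mη (η₁ t)))*x + 0)
        (K := Real.toNNReal (2*(b^2/r)*Mp + 2*(b^2/r)*Mη))
        (fun t => lip_aux hk.le hMp0 (by positivity) 0 (hcη t))
        (fun t ht => ?_) (fun t ht => ?_) (by rw [hp₁T, hp₂T])
      · convert hp₁ t ht using 1
        simp only [cl_eq (hbp₁ t ht), cl_eq (hbη₁ t ht)]
        ring
      · convert hp₂ t ht using 1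
        simp only [cl_eq (hbp₂ t ht), cl_eq (hbη₁ t ht)]
        rw [heqη ht]
        ring
    -- Step 3 : uniqueness of v
    have heqv : EqOn v₁ v₂ (Icc (0:ℝ) T) := by
      refine uniq_fwd (w := fun t x => 0*(cl 0 x)^2 + (-(2*(b^2/r)*(cl Mη (η₁ t))))*x + σ^2)
        (K := Real.toNNReal (2*0*0 + 2*(b^2/r)*Mη))
        (fun t => lip_aux le_rfl le_rfl (by positivity) (σ^2) (by rw [abs_neg]; exact hcη t))
        (fun t ht => ?_) (fun t ht => ?_) (by rw [hv₁0, hv₂0])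
      · convert hv₁ t ht using 1
        simp only [cl_eq (hbη₁ t ht)]
        ring
      · convert hv₂ t ht using 1
        simp only [cl_eq (hbη₁ t ht)]
        rw [heqη ht]
        ring
    -- Step 4 : uniqueness of φ
    have heqφ : EqOn φ₁ φ₂ (Icc (0:ℝ) T) := by
      refine uniq_bwd
        (w := fun t x => 0*(cl 0 x)^2 + 0*x + (-(σ^2/2) * (Xa / Real.sqrt (v₁ t)) * p₁ t))
        (K := Real.toNNReal (2*0*0 + 0))
        (fun t => lip_aux le_rfl le_rfl le_rfl _ (by simp))
        (fun t ht => ?_) (fun t ht => ?_) (by rw [hφ₁T, hφ₂T])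
      · convert hφ₁ t ht using 1
        ring
      · convert hφ₂ t ht using 1
        simp only [heqv ht, heqp ht]
        ring
    -- Step 5 : uniqueness of q
    have heqq : EqOn q₁ q₂ (Icc (0:ℝ) T) := by
      refine uniq_fwd
        (w := fun t x => 0*(cl 0 x)^2 + 0*x
          + (γ t - (b^2/r) * φ₁ t + (σ^2/2) * Xa / Real.sqrt (v₁ t)))
        (K := Real.toNNReal (2*0*0 + 0))
        (fun t => lip_aux le_rfl le_rfl le_rfl _ (by simp))
        (fun t ht => ?_) (fun t ht => ?_) (by rw [hq₁0, hq₂0])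
      · convert hq₁ t ht using 1
        ring
      · convert hq₂ t ht using 1
        simp only [heqv ht, heqφ ht]
        ring
    exact fun t ht => ⟨heqη ht, heqp ht, heqv ht, heqφ ht, heqq ht⟩
end
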